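/- Let Y be a finite group with subgroups X ⊴ Y and let σ ∈ Gal(Q_{|Y|}/Q). Suppose ψ ∈ Irr(Y) restricts multiplicity-free to X and ψ|_X is σ-invariant (as a character of X). Then ψ^σ = ψη for some linear character η ∈ Irr(Y | 1_X). -/

import Mathlib

open scoped Classical BigOperators

noncomputable section

open CategoryTheory Representation Module

namespace Stmt14Aux

variable {G : Type} [Group G] [Fintype G]

lemma cardC_ne_zero (G : Type) [Group G] [Fintype G] : (Fintype.card G : ℂ) ≠ 0 := by
  exact_mod_cast Fintype.card_ne_zero

lemma L1 (V W : FDRep ℂ G) :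
    ((finrank ℂ (Representation.linHom V.ρ W.ρ).invariants : ℂ)) =
      (Fintype.card G : ℂ)⁻¹ * ∑ g : G, V.character g⁻¹ * W.character g := by
  haveI : Invertible (Fintype.card G : ℂ) :=
    invertibleOfNonzero (cardC_ne_zero G)
  have h := FDRep.average_char_eq_finrank_invariants (FDRep.of (Representation.linHom V.ρ W.ρ))
  rw [show (FDRep.of (linHom V.ρ W.ρ)).ρ = linHom V.ρ W.ρ from rfl] at h
  rw [Nat.card_eq_fintype_card] at h
  simp only [FDRep.char_linHom] at h
  exact h.symm

lemma L2 (V W : FDRep ℂ G) :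
    finrank ℂ (Representation.linHom V.ρ W.ρ).invariants = finrank ℂ (V ⟶ W) :=
  (Representation.linHom.invariantsEquivFDRepHom (G := G) V W).finrank_eq

lemma endV_one (V : FDRep ℂ G) [Simple V] :
    finrank ℂ (Representation.linHom V.ρ V.ρ).invariants = 1 := by
  rw [L2]
  have := FDRep.finrank_hom_simple_simple (G := G) (k := ℂ) V V
  rw [this, if_pos ⟨Iso.refl V⟩]


set_option linter.unusedSectionVars false

lemma invariant_eq_top {M : Type} [AddCommGroup M] [Module ℂ M] [FiniteDimensional ℂ M]
    (ρ : Representation ℂ G M)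
    (hEnd : finrank ℂ (Representation.linHom ρ ρ).invariants = 1)
    (p : Submodule ℂ M) (hp : p ≠ ⊥) (hmap : ∀ (g : G), ∀ v ∈ p, ρ g v ∈ p) : p = ⊤ := by
  classical
  obtain ⟨q, hq⟩ := p.exists_isCompl
  set π₁ : M →ₗ[ℂ] M := p.subtype ∘ₗ (p.projectionOnto q hq) with hπ₁
  have hπ₁mem : ∀ v, π₁ v ∈ p := fun v => (p.projectionOnto q hq v).2
  have hπ₁id : ∀ v ∈ p, π₁ v = v := by
    intro v hv
    simp [hπ₁, Submodule.projectionOnto_apply_left hq ⟨v, hv⟩]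
  set c : ℂ := (Fintype.card G : ℂ)⁻¹ with hc
  set π : M →ₗ[ℂ] M := c • ∑ g : G, (ρ g) ∘ₗ π₁ ∘ₗ (ρ g⁻¹) with hπ
  have hπapply : ∀ v, π v = c • ∑ g : G, ρ g (π₁ (ρ g⁻¹ v)) := by
    intro v; simp [hπ, LinearMap.sum_apply]
  have hπmem : ∀ v, π v ∈ p := by
    intro v
    rw [hπapply]
    exact p.smul_mem _ (Submodule.sum_mem _ fun g _ => hmap g _ (hπ₁mem _))
  have hπid : ∀ v ∈ p, π v = v := by
    intro v hv
    rw [hπapply]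
    have : ∀ g : G, ρ g (π₁ (ρ g⁻¹ v)) = v := by
      intro g
      rw [hπ₁id _ (hmap g⁻¹ v hv)]
      have : (ρ g) ((ρ g⁻¹) v) = (ρ (g * g⁻¹)) v := by rw [map_mul]; rfl
      rw [this, mul_inv_cancel, map_one]; rfl
    simp only [this, Finset.sum_const, Finset.card_univ, ← Nat.cast_smul_eq_nsmul ℂ, smul_smul, hc]
    rw [inv_mul_cancel₀ (cardC_ne_zero G), one_smul]
  have hπinv : π ∈ (Representation.linHom ρ ρ).invariants := by
    intro g
    rw [Representation.linHom_apply]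
    ext v
    simp only [LinearMap.comp_apply]
    rw [hπapply, hπapply, map_smul]
    congr 1
    rw [map_sum]
    refine Fintype.sum_equiv (Equiv.mulLeft g) _ _ ?_
    intro x
    have h1 : ∀ (h₁ h₂ : G) (w : M), (ρ h₁) ((ρ h₂) w) = (ρ (h₁ * h₂)) w := by
      intro h₁ h₂ w; rw [map_mul]; rfl
    simp only [Equiv.coe_mulLeft, h1, mul_inv_rev]
  -- the invariants space
  have hid : (LinearMap.id : M →ₗ[ℂ] M) ∈ (Representation.linHom ρ ρ).invariants := by
    intro g
    rw [Representation.linHom_apply]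
    ext v
    simp only [LinearMap.comp_apply, LinearMap.id_apply]
    rw [show (ρ g) ((ρ g⁻¹) v) = (ρ (g * g⁻¹)) v by rw [map_mul]; rfl, mul_inv_cancel, map_one]
    rfl
  obtain ⟨u, hu, hune⟩ := Submodule.ne_bot_iff p |>.1 hp
  haveI : Nontrivial M := ⟨⟨u, 0, hune⟩⟩
  obtain ⟨e, he0, hgen⟩ := (finrank_eq_one_iff' (K := ℂ) (V := (Representation.linHom ρ ρ).invariants)).1 hEnd
  obtain ⟨a, ha⟩ := hgen ⟨π, hπinv⟩
  obtain ⟨b, hb⟩ := hgen ⟨LinearMap.id, hid⟩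
  have hbne : b ≠ 0 := by
    rintro rfl
    rw [zero_smul] at hb
    have : (LinearMap.id : M →ₗ[ℂ] M) = 0 := by
      simpa [Subtype.ext_iff] using hb.symm
    exact hune (by simpa using congrFun (congrArg DFunLike.coe this) u)
  have hπ_scal : π = (a * b⁻¹) • (LinearMap.id : M →ₗ[ℂ] M) := by
    have h2 : (⟨π, hπinv⟩ : (Representation.linHom ρ ρ).invariants)
        = (a * b⁻¹) • ⟨LinearMap.id, hid⟩ := by
      rw [← ha, ← hb, smul_smul]
      congr 1
      rw [mul_assoc, inv_mul_cancel₀ hbne, mul_one]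
    have := congrArg Subtype.val h2
    simpa using this
  have ht : (a * b⁻¹) • u = u := by
    have := hπid u hu
    rw [hπ_scal] at this
    simpa using this
  have ht1 : (a * b⁻¹) = 1 := by
    have h3 : ((a * b⁻¹) - 1) • u = 0 := by rw [sub_smul, one_smul, ht, sub_self]
    rcases smul_eq_zero.1 h3 with h | h
    · exact sub_eq_zero.1 h
    · exact absurd h hune
  refine Submodule.eq_top_iff'.2 fun v => ?_
  have := hπmem v
  rw [hπ_scal] at this
  simpa [ht1] using this


lemma exists_common_eigenvector {M : Type} [AddCommGroup M] [Module ℂ M] [FiniteDimensional ℂ M]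
    [Nontrivial M] {ι : Type} (T : ι → Module.End ℂ M)
    (hcomm : ∀ i j, T i * T j = T j * T i) :
    ∃ v : M, v ≠ 0 ∧ ∀ i, ∃ c : ℂ, T i v = c • v := by
  classical
  suffices H : ∀ (n : ℕ) (p : Submodule ℂ M), finrank ℂ p ≤ n → p ≠ ⊥ →
      (∀ i, ∀ v ∈ p, T i v ∈ p) →
      ∃ v ∈ p, v ≠ 0 ∧ ∀ i, ∃ c : ℂ, T i v = c • v by
    obtain ⟨v, _, hv⟩ := H (finrank ℂ M) ⊤ (le_of_eq (finrank_top ℂ M)) top_ne_bot (fun i v _ => trivial)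
    exact ⟨v, hv⟩
  intro n
  induction n with
  | zero =>
    intro p hpn hp _
    obtain ⟨u, hu, hune⟩ := Submodule.ne_bot_iff p |>.1 hp
    haveI : Nontrivial p := Submodule.nontrivial_iff_ne_bot.2 hp
    have : 0 < finrank ℂ p := finrank_pos
    omega
  | succ n IH =>
    intro p hpn hp hmap
    by_cases hsc : ∀ i, ∃ c : ℂ, ∀ v ∈ p, T i v = c • v
    · obtain ⟨u, hu, hune⟩ := Submodule.ne_bot_iff p |>.1 hp
      exact ⟨u, hu, hune, fun i => (hsc i).imp fun c hc => hc u hu⟩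
    · push_neg at hsc
      obtain ⟨i₀, hi₀⟩ := hsc
      haveI : Nontrivial p := Submodule.nontrivial_iff_ne_bot.2 hp
      set f : Module.End ℂ p := (T i₀).restrict (hmap i₀) with hf
      obtain ⟨μ, hμ⟩ := Module.End.exists_eigenvalue f
      obtain ⟨w, hw⟩ := hμ.exists_hasEigenvector
      set E : Submodule ℂ M := p ⊓ Module.End.eigenspace (T i₀) μ with hE
      have hEp : E ≤ p := inf_le_left
      have hEne : E ≠ ⊥ := by
        intro h
        have hwmem : (w : M) ∈ E := by
          refine ⟨w.2, ?_⟩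
          simp only [SetLike.mem_coe, Module.End.mem_eigenspace_iff]
          have := hw.apply_eq_smul
          have h2 := congrArg Subtype.val this
          simpa [hf, LinearMap.restrict_apply] using h2
        rw [h] at hwmem
        exact hw.2 (Subtype.ext (by simpa using hwmem))
      have hElt : E < p := by
        refine lt_of_le_of_ne hEp fun h => ?_
        obtain ⟨v, hv, hvne⟩ := hi₀ μ
        have hvE : v ∈ E := h.symm ▸ hv
        exact hvne (Module.End.mem_eigenspace_iff.1 hvE.2)
      have hfr : finrank ℂ E ≤ n := by
        haveI : FiniteDimensional ℂ p := inferInstance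
        have := Submodule.finrank_lt_finrank_of_lt hElt
        omega
      have hEmap : ∀ i, ∀ v ∈ E, T i v ∈ E := by
        intro i v hv
        refine ⟨hmap i v hv.1, ?_⟩
        simp only [SetLike.mem_coe, Module.End.mem_eigenspace_iff]
        have h2 : T i₀ (T i v) = T i (T i₀ v) := by
          have h3 := congrArg (fun S : Module.End ℂ M => S v) (hcomm i₀ i)
          simpa [Module.End.mul_apply] using h3
        rw [h2, Module.End.mem_eigenspace_iff.1 hv.2, map_smul]
      obtain ⟨v, hvE, hvne, hvc⟩ := IH E hfr hEne hEmap
      exact ⟨v, hEp hvE, hvne, hvc⟩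

/-- The `σ`-twist of a representation, via matrices. -/
def twistRep (σ : ℂ →+* ℂ) (V : FDRep ℂ G) :
    Representation ℂ G (Fin (finrank ℂ V) → ℂ) where
  toFun g := Matrix.toLin'
    ((LinearMap.toMatrix (finBasis ℂ V) (finBasis ℂ V) (V.ρ g)).map σ)
  map_one' := by
    show Matrix.toLin' _ = _
    rw [_root_.map_one V.ρ, LinearMap.toMatrix_one, Matrix.map_one σ (map_zero σ) (map_one σ)]
    exact Matrix.toLin'_one
  map_mul' g h := by
    show Matrix.toLin' _ = _
    rw [_root_.map_mul V.ρ, LinearMap.toMatrix_mul, Matrix.map_mul, Matrix.toLin'_mul]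
    rfl

lemma trace_map (σ : ℂ →+* ℂ) {n : Type} [Fintype n] (A : Matrix n n ℂ) :
    Matrix.trace (A.map σ) = σ (Matrix.trace A) := by
  simp [Matrix.trace, Matrix.diag, map_sum]

lemma twist_char (σ : ℂ →+* ℂ) (V : FDRep ℂ G) (g : G) :
    (FDRep.of (twistRep σ V)).character g = σ (V.character g) := by
  show LinearMap.trace ℂ _ (twistRep σ V g) = σ (LinearMap.trace ℂ _ (V.ρ g))
  rw [LinearMap.trace_eq_matrix_trace ℂ (Pi.basisFun ℂ (Fin (finrank ℂ V))),
    LinearMap.trace_eq_matrix_trace ℂ (finBasis ℂ V)]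
  show Matrix.trace (LinearMap.toMatrix _ _ (Matrix.toLin' _)) = _
  rw [LinearMap.toMatrix_eq_toMatrix', LinearMap.toMatrix'_toLin', trace_map]

lemma id_mem_linHom_invariants {M : Type} [AddCommGroup M] [Module ℂ M]
    (ρ : Representation ℂ G M) :
    (LinearMap.id : M →ₗ[ℂ] M) ∈ (Representation.linHom ρ ρ).invariants := by
  intro g
  rw [Representation.linHom_apply]
  ext v
  simp only [LinearMap.comp_apply, LinearMap.id_apply]
  rw [show (ρ g) ((ρ g⁻¹) v) = (ρ (g * g⁻¹)) v by rw [map_mul]; rfl, mul_inv_cancel, map_one]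
  rfl

end Stmt14Aux

/-- The inner product of two class functions on a finite group. -/
noncomputable def charInner {G : Type} [Group G] (φ ψ : G → ℂ) : ℂ :=
  (Nat.card G : ℂ)⁻¹ * ∑ᶠ g : G, φ g * ψ g⁻¹

/-- `χ : G → ℂ` is an irreducible (complex) character of `G`. -/
def IsIrredChar (G : Type) [Group G] (χ : G → ℂ) : Prop :=
  ∃ V : FDRep ℂ G, CategoryTheory.Simple V ∧ χ = V.character

set_option maxHeartbeats 1000000 in
/-- If `Y/X` is abelian, `ψ ∈ Irr(Y)` restricts multiplicity-free to `X` and `ψ|_X` is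
`σ`-invariant, then `ψ^σ = ψη` for some linear character `η ∈ Irr(Y | 1_X)`. -/
theorem stmt_14 {Y : Type} [Group Y] [Fintype Y] (X : Subgroup Y) [X.Normal]
    (hab : ∀ a b : Y ⧸ X, a * b = b * a) (σ : ℂ →+* ℂ)
    (ψ : Y → ℂ) (hψ : IsIrredChar Y ψ)
    (hmf : ∀ ρ : ↥X → ℂ, IsIrredChar ↥X ρ →
      charInner (fun x : ↥X => ψ ↑x) ρ = 0 ∨ charInner (fun x : ↥X => ψ ↑x) ρ = 1)
    (hinv : ∀ x : ↥X, σ (ψ ↑x) = ψ ↑x) :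
    ∃ η : Y →* ℂ, (∀ x ∈ X, η x = 1) ∧ ∀ y : Y, σ (ψ y) = ψ y * η y := by
  classical
  clear hmf
  obtain ⟨V, hVs, rfl⟩ := hψ
  haveI := hVs
  have hEndV : finrank ℂ (Representation.linHom V.ρ V.ρ).invariants = 1 := Stmt14Aux.endV_one V
  haveI hVnt : Nontrivial V := by
    by_contra h
    rw [not_nontrivial_iff_subsingleton] at h
    haveI := h
    have h0 : finrank ℂ (Representation.linHom V.ρ V.ρ).invariants = 0 :=
      finrank_zero_of_subsingleton
    omega
  set W : FDRep ℂ Y := FDRep.of (Stmt14Aux.twistRep σ V) with hWdef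
  have hWchar : ∀ g : Y, W.character g = σ (V.character g) := fun g => Stmt14Aux.twist_char σ V g
  have hL1VV := Stmt14Aux.L1 V V
  rw [hEndV] at hL1VV
  have hVV : (Fintype.card Y : ℂ)⁻¹ * ∑ g : Y, V.character g⁻¹ * V.character g = 1 := by
    rw [← hL1VV]; norm_num
  have hsum : (Fintype.card Y : ℂ)⁻¹ * ∑ g : Y, W.character g⁻¹ * W.character g = 1 := by
    have h1 : ∀ g : Y, W.character g⁻¹ * W.character g = σ (V.character g⁻¹ * V.character g) := by
      intro g; rw [hWchar, hWchar, map_mul]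
    simp only [h1]
    rw [show ((Fintype.card Y : ℂ))⁻¹ * ∑ g : Y, σ (V.character g⁻¹ * V.character g)
        = σ ((Fintype.card Y : ℂ)⁻¹ * ∑ g : Y, V.character g⁻¹ * V.character g) by
      rw [map_mul, map_inv₀, map_natCast, map_sum], hVV, map_one]
  have hEndW : finrank ℂ (Representation.linHom W.ρ W.ρ).invariants = 1 := by
    have h2 := Stmt14Aux.L1 W W
    rw [hsum] at h2
    exact_mod_cast h2
  -- restriction to X
  set ρVX : Representation ℂ ↥X V := V.ρ.comp X.subtype with hρVX
  set ρWX : Representation ℂ ↥X W := W.ρ.comp X.subtype with hρWX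
  set U : Submodule ℂ ((V : Type) →ₗ[ℂ] (W : Type)) :=
    (Representation.linHom ρVX ρWX).invariants with hUdef
  set NX : Submodule ℂ ((V : Type) →ₗ[ℂ] (V : Type)) :=
    (Representation.linHom ρVX ρVX).invariants with hNXdef
  have hXchar : ∀ x : ↥X, W.character ↑x = V.character ↑x := by
    intro x; rw [hWchar]; exact hinv x
  have hL1XX : ((finrank ℂ NX : ℂ)) =
      (Fintype.card ↥X : ℂ)⁻¹ * ∑ x : ↥X, V.character ↑x⁻¹ * V.character ↑x :=
    Stmt14Aux.L1 (FDRep.of ρVX) (FDRep.of ρVX)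
  have hL1XW : ((finrank ℂ U : ℂ)) =
      (Fintype.card ↥X : ℂ)⁻¹ * ∑ x : ↥X, V.character ↑x⁻¹ * W.character ↑x :=
    Stmt14Aux.L1 (FDRep.of ρVX) (FDRep.of ρWX)
  have hUr : finrank ℂ U = finrank ℂ NX := by
    have h3 : ∑ x : ↥X, V.character ↑x⁻¹ * W.character ↑x
        = ∑ x : ↥X, V.character ↑x⁻¹ * V.character ↑x :=
      Finset.sum_congr rfl fun x _ => by rw [hXchar]
    rw [h3, ← hL1XX] at hL1XW
    exact_mod_cast hL1XW
  have hNXpos : 0 < finrank ℂ NX := by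
    obtain ⟨v0, hv0⟩ := exists_ne (0 : V)
    have hidne : (⟨LinearMap.id, Stmt14Aux.id_mem_linHom_invariants ρVX⟩ : NX) ≠ 0 := by
      intro h
      have h4 : (LinearMap.id : (V : Type) →ₗ[ℂ] (V : Type)) = 0 := by
        simpa [Subtype.ext_iff] using h
      exact hv0 (by simpa using congrFun (congrArg DFunLike.coe h4) v0)
    haveI : Nontrivial NX := nontrivial_of_ne _ 0 hidne
    exact finrank_pos
  haveI hUnt : Nontrivial U := by
    rw [← hNXdef] at *
    refine finrank_pos_iff (R := ℂ).1 ?_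
    rw [hUr]; exact hNXpos
  -- helper multiplication lemmas
  have hmulV : ∀ (a b : Y) (v : V), V.ρ a (V.ρ b v) = V.ρ (a * b) v := by
    intro a b v; rw [_root_.map_mul]; rfl
  have hmulW : ∀ (a b : Y) (w : W), W.ρ a (W.ρ b w) = W.ρ (a * b) w := by
    intro a b w; rw [_root_.map_mul]; rfl
  have hV1 : ∀ v : V, V.ρ 1 v = v := by intro v; rw [_root_.map_one]; rfl
  -- membership criterion for U
  have hUmem : ∀ f : (V : Type) →ₗ[ℂ] (W : Type),
      f ∈ U ↔ ∀ x ∈ X, ∀ v : V, W.ρ x (f v) = f (V.ρ x v) := by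
    intro f
    constructor
    · intro hf x hx v
      have h1 := hf ⟨x, hx⟩
      rw [Representation.linHom_apply] at h1
      have h2 := congrArg (fun g : (V : Type) →ₗ[ℂ] (W : Type) => g (V.ρ x v)) h1
      simp only [LinearMap.comp_apply] at h2
      have h5 : ρVX (⟨x, hx⟩⁻¹) (V.ρ x v) = v := by
        show V.ρ (↑(⟨x, hx⟩⁻¹ : ↥X)) (V.ρ x v) = v
        rw [hmulV]
        simp only [Subgroup.coe_inv, inv_mul_cancel]
        exact hV1 v
      rw [h5] at h2
      exact h2
    · intro hf x
      rw [Representation.linHom_apply]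
      ext1 v
      simp only [LinearMap.comp_apply]
      have h3 := hf ↑x x.2 (V.ρ (↑x)⁻¹ v)
      have h6 : V.ρ ↑x (V.ρ (↑x)⁻¹ v) = v := by rw [hmulV, mul_inv_cancel]; exact hV1 v
      rw [h6] at h3
      show W.ρ ↑x (f (ρVX x⁻¹ v)) = f v
      have h7 : ρVX x⁻¹ v = V.ρ (↑x)⁻¹ v := by
        show V.ρ (↑(x⁻¹ : ↥X)) v = V.ρ (↑x)⁻¹ v
        rw [Subgroup.coe_inv]
      rw [h7, h3]
  -- the Y-action on the ambient hom space preserves U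
  have hTmap : ∀ y : Y, ∀ f ∈ U, (Representation.linHom V.ρ W.ρ) y f ∈ U := by
    intro y f hf
    rw [hUmem] at hf ⊢
    intro x hx v
    rw [Representation.linHom_apply]
    simp only [LinearMap.comp_apply]
    have hx' : y⁻¹ * x * y ∈ X := by
      have := ‹X.Normal›.conj_mem x hx y⁻¹
      simpa [inv_inv] using this
    -- LHS
    rw [hmulW x y, show x * y = y * (y⁻¹ * x * y) by group, ← hmulW y (y⁻¹ * x * y)]
    rw [hf (y⁻¹ * x * y) hx' (V.ρ y⁻¹ v)]
    rw [hmulV (y⁻¹ * x * y) y⁻¹, show y⁻¹ * x * y * y⁻¹ = y⁻¹ * x by group, ← hmulV y⁻¹ x]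
  -- restricted operators and commutation
  set TU : Y → Module.End ℂ U := fun y =>
    LinearMap.restrict ((Representation.linHom V.ρ W.ρ) y) (hTmap y) with hTUdef
  have hTfix : ∀ (x : Y), x ∈ X → ∀ f ∈ U, (Representation.linHom V.ρ W.ρ) x f = f := by
    intro x hx f hf
    rw [Representation.linHom_apply]
    ext v
    simp only [LinearMap.comp_apply]
    rw [(hUmem f).1 hf x hx (V.ρ x⁻¹ v), hmulV, mul_inv_cancel, hV1]
  have hTmul : ∀ (a b : Y) (f : (V : Type) →ₗ[ℂ] (W : Type)),
      (Representation.linHom V.ρ W.ρ) a ((Representation.linHom V.ρ W.ρ) b f)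
        = (Representation.linHom V.ρ W.ρ) (a * b) f := by
    intro a b f; rw [_root_.map_mul]; rfl
  have hcomm : ∀ a b : Y, TU a * TU b = TU b * TU a := by
    intro a b
    refine LinearMap.ext fun f => Subtype.ext ?_
    have hfU := f.2
    show (Representation.linHom V.ρ W.ρ) a ((Representation.linHom V.ρ W.ρ) b ↑f)
        = (Representation.linHom V.ρ W.ρ) b ((Representation.linHom V.ρ W.ρ) a ↑f)
    rw [hTmul, hTmul]
    have hX : (b * a)⁻¹ * (a * b) ∈ X := by
      rw [← QuotientGroup.eq]
      have := hab (QuotientGroup.mk a) (QuotientGroup.mk b)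
      rw [← QuotientGroup.mk_mul, ← QuotientGroup.mk_mul] at this
      exact this.symm
    rw [show a * b = (b * a) * ((b * a)⁻¹ * (a * b)) by group]
    rw [← hTmul (b * a) ((b * a)⁻¹ * (a * b))]
    rw [hTfix _ hX ↑f hfU]
  -- common eigenvector
  obtain ⟨fU, hfU0, hfUc⟩ := Stmt14Aux.exists_common_eigenvector (M := ↥U) TU hcomm
  set f : (V : Type) →ₗ[ℂ] (W : Type) := ↑fU with hfdef
  have hfne : f ≠ 0 := by
    intro h
    exact hfU0 (Subtype.ext h)
  have hch : ∀ y : Y, ∃ c : ℂ, (Representation.linHom V.ρ W.ρ) y f = c • f := by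
    intro y
    obtain ⟨c, hc⟩ := hfUc y
    refine ⟨c, ?_⟩
    have := congrArg Subtype.val hc
    simpa [hTUdef, LinearMap.restrict_apply] using this
  choose μ hμ using hch
  have huniq : ∀ c d : ℂ, c • f = d • f → c = d := by
    intro c d h
    have h8 : (c - d) • f = 0 := by rw [show (c - d) • f = c • f - d • f from sub_smul c d f, h, sub_self]
    rcases smul_eq_zero.1 h8 with h9 | h9
    · exact sub_eq_zero.1 h9
    · exact absurd h9 hfne
  have hμ1 : μ 1 = 1 := by
    refine huniq _ _ ?_
    rw [← hμ 1, _root_.map_one, one_smul]; rfl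
  have hμmul : ∀ a b : Y, μ (a * b) = μ a * μ b := by
    intro a b
    refine huniq _ _ ?_
    rw [← hμ (a * b), ← hTmul a b, hμ b, map_smul, hμ a, smul_smul, mul_comm (μ a)]
  have hμX : ∀ x ∈ X, μ x = 1 := by
    intro x hx
    refine huniq _ _ ?_
    rw [← hμ x, hTfix x hx f fU.2, one_smul]
  have hμne : ∀ y : Y, μ y ≠ 0 := by
    intro y h
    have := hμmul y y⁻¹
    rw [mul_inv_cancel, hμ1, h, zero_mul] at this
    exact one_ne_zero this
  -- the intertwining relation
  have hrel : ∀ (y : Y) (v : V), W.ρ y (f v) = μ y • f (V.ρ y v) := by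
    intro y v
    have h10 := congrArg (fun g : (V : Type) →ₗ[ℂ] (W : Type) => g (V.ρ y v)) (hμ y)
    simp only [Representation.linHom_apply, LinearMap.comp_apply, LinearMap.smul_apply] at h10
    rw [hmulV, inv_mul_cancel, hV1] at h10
    exact h10
  -- kernel and range
  have hker : LinearMap.ker f = ⊥ := by
    by_contra h
    have : LinearMap.ker f = ⊤ := by
      refine Stmt14Aux.invariant_eq_top V.ρ hEndV _ h ?_
      intro y v hv
      rw [LinearMap.mem_ker] at hv ⊢
      have := hrel y v
      rw [hv, map_zero] at this
      rcases smul_eq_zero.1 this.symm with h9 | h9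
      · exact absurd h9 (hμne y)
      · exact h9
    exact hfne (LinearMap.ker_eq_top.1 this)
  have hrange : LinearMap.range f = ⊤ := by
    refine Stmt14Aux.invariant_eq_top W.ρ hEndW _ ?_ ?_
    · intro h
      exact hfne (LinearMap.range_eq_bot.1 h)
    · rintro y w ⟨v, rfl⟩
      rw [hrel y v]
      exact Submodule.smul_mem _ _ ⟨V.ρ y v, rfl⟩
  set e : (V : Type) ≃ₗ[ℂ] (W : Type) :=
    LinearEquiv.ofBijective f ⟨LinearMap.ker_eq_bot.1 hker, LinearMap.range_eq_top.1 hrange⟩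
    with hedef
  have hWconj : ∀ y : Y, W.ρ y = μ y • (e.conj (V.ρ y)) := by
    intro y
    refine LinearMap.ext fun w => ?_
    rw [LinearMap.smul_apply, LinearEquiv.conj_apply]
    simp only [LinearMap.comp_apply]
    have h11 := hrel y (e.symm w)
    have h12 : f (e.symm w) = w := by
      show e (e.symm w) = w
      exact e.apply_symm_apply w
    rw [h12] at h11
    rw [h11]
    rfl
  have hchar : ∀ y : Y, W.character y = μ y * V.character y := by
    intro y
    show LinearMap.trace ℂ _ (W.ρ y) = μ y * LinearMap.trace ℂ _ (V.ρ y)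
    rw [hWconj y, map_smul, LinearMap.trace_conj']
    rfl
  refine ⟨{ toFun := μ, map_one' := hμ1, map_mul' := hμmul }, fun x hx => hμX x hx, ?_⟩
  intro y
  rw [← hWchar y, hchar y, mul_comm]
  rfl
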